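/- Let R_d and R_i be Hermitian positive semidefinite M×M complex matrices satisfying the rank additivity property rank(R_d + R_i) = rank(R_d) + rank(R_i). Then R_d − R_d (R_d + R_i)† R_d = 0, where † denotes the Moore–Penrose pseudoinverse. (In other words, the error covariance of the linear MMSE estimator in the noiseless case vanishes.) -/

import Mathlib

open Matrix
open scoped ComplexOrder

/-- The four Penrose equations characterizing the Moore–Penrose pseudoinverse. -/
def IsMoorePenrose {m n : Type*} [Fintype m] [Fintype n]
    (A : Matrix m n ℂ) (Ap : Matrix n m ℂ) : Prop :=
  A * Ap * A = A ∧ Ap * A * Ap = Ap ∧ (A * Ap)ᴴ = A * Ap ∧ (Ap * A)ᴴ = Ap * A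

/-- Uniqueness of the Moore–Penrose pseudoinverse. -/
lemma mp_unique {m n : Type*} [Fintype m] [Fintype n]
    (A : Matrix m n ℂ) (X Y : Matrix n m ℂ)
    (hX : IsMoorePenrose A X) (hY : IsMoorePenrose A Y) : X = Y := by
  obtain ⟨hX1, hX2, hX3, hX4⟩ := hX
  obtain ⟨hY1, hY2, hY3, hY4⟩ := hY
  have hAX : A * X = A * Y := by
    calc A * X = (A * X)ᴴ := hX3.symm
    _ = ((A * Y * A) * X)ᴴ := by rw [hY1]
    _ = ((A * Y) * (A * X))ᴴ := by simp only [Matrix.mul_assoc]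
    _ = (A * X)ᴴ * (A * Y)ᴴ := by rw [conjTranspose_mul]
    _ = (A * X) * (A * Y) := by rw [hX3, hY3]
    _ = ((A * X * A) * Y) := by simp only [Matrix.mul_assoc]
    _ = A * Y := by rw [hX1]
  have hXA : X * A = Y * A := by
    calc X * A = (X * A)ᴴ := hX4.symm
    _ = (X * (A * Y * A))ᴴ := by rw [hY1]
    _ = ((X * A) * (Y * A))ᴴ := by simp only [Matrix.mul_assoc]
    _ = (Y * A)ᴴ * (X * A)ᴴ := by rw [conjTranspose_mul]
    _ = (Y * A) * (X * A) := by rw [hX4, hY4]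
    _ = Y * (A * X * A) := by simp only [Matrix.mul_assoc]
    _ = Y * A := by rw [hX1]
  calc X = X * A * X := hX2.symm
  _ = X * A * Y := by rw [Matrix.mul_assoc, hAX, ← Matrix.mul_assoc]
  _ = Y * A * Y := by rw [hXA]
  _ = Y := hY2

/-- A PSD summand of zero vanishes. -/
lemma psd_add_eq_zero {n : Type*} [Fintype n] [DecidableEq n] {A B : Matrix n n ℂ}
    (hA : A.PosSemidef) (hB : B.PosSemidef) (h : A + B = 0) : A = 0 := by
  have hvec : ∀ x, A *ᵥ x = 0 := by
    intro x
    rw [← hA.dotProduct_mulVec_zero_iff]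
    have h1 : star x ⬝ᵥ A *ᵥ x + star x ⬝ᵥ B *ᵥ x = 0 := by
      rw [← dotProduct_add, ← add_mulVec, h, zero_mulVec, dotProduct_zero]
    have h2 := hA.dotProduct_mulVec_nonneg x
    have h3 := hB.dotProduct_mulVec_nonneg x
    have : star x ⬝ᵥ A *ᵥ x ≤ 0 := by
      have : star x ⬝ᵥ A *ᵥ x = -(star x ⬝ᵥ B *ᵥ x) := by linear_combination h1
      rw [this]; exact neg_nonpos.mpr h3
    exact le_antisymm this h2
  ext i j
  have := congrFun (hvec (Pi.single j 1)) i
  simpa [mulVec_single] using this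

open scoped MatrixOrder in
theorem error_covariance_vanishes {M : ℕ}
    (Rd Ri : Matrix (Fin M) (Fin M) ℂ)
    (hRd : Rd.PosSemidef) (hRi : Ri.PosSemidef)
    (hrank : (Rd + Ri).rank = Rd.rank + Ri.rank)
    (Sp : Matrix (Fin M) (Fin M) ℂ)
    (hSp : IsMoorePenrose (Rd + Ri) Sp) :
    Rd - Rd * Sp * Rd = 0 := by
  set S := Rd + Ri with hSdef
  have hS : S.PosSemidef := hRd.add hRi
  obtain ⟨h1, h2, h3, h4⟩ := hSp
  have hSH : Sᴴ = S := hS.1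
  -- Sp is Hermitian
  have hSpH : Spᴴ = Sp := by
    refine (mp_unique S Spᴴ Sp ⟨?_, ?_, ?_, ?_⟩ ⟨h1, h2, h3, h4⟩)
    · calc S * Spᴴ * S = (Sᴴ * Spᴴ) * Sᴴ := by rw [hSH]
      _ = (S * Sp * S)ᴴ := by simp [conjTranspose_mul, Matrix.mul_assoc]
      _ = S := by rw [h1, hSH]
    · calc Spᴴ * S * Spᴴ = (Spᴴ * Sᴴ) * Spᴴ := by rw [hSH]
      _ = (Sp * S * Sp)ᴴ := by simp [conjTranspose_mul, Matrix.mul_assoc]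
      _ = Spᴴ := by rw [h2]
    · calc (S * Spᴴ)ᴴ = Sp * Sᴴ := by simp [conjTranspose_mul]
      _ = Sp * S := by rw [hSH]
      _ = (Sp * S)ᴴ := h4.symm
      _ = Sᴴ * Spᴴ := by simp [conjTranspose_mul]
      _ = S * Spᴴ := by rw [hSH]
    · calc (Spᴴ * S)ᴴ = Sᴴ * Sp := by simp [conjTranspose_mul]
      _ = S * Sp := by rw [hSH]
      _ = (S * Sp)ᴴ := h3.symm
      _ = Spᴴ * Sᴴ := by simp [conjTranspose_mul]
      _ = Spᴴ * S := by rw [hSH]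
  -- the projector Q := 1 - S * Sp kills S
  set Q : Matrix (Fin M) (Fin M) ℂ := 1 - S * Sp with hQdef
  have hQS : Q * S = 0 := by
    simp [hQdef, Matrix.sub_mul, h1]
  have hQH : Qᴴ = Q := by
    simp [hQdef, conjTranspose_sub, h3]
  -- Q kills Rd and Ri
  have key : ∀ A B : Matrix (Fin M) (Fin M) ℂ, A.PosSemidef → B.PosSemidef →
      A + B = S → Q * A = 0 := by
    intro A B hA hB hAS
    have hsum : Q * A * Qᴴ + Q * B * Qᴴ = 0 := by
      have : Q * A * Qᴴ + Q * B * Qᴴ = Q * (A + B) * Qᴴ := by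
        noncomm_ring
      rw [this, hAS, hQS, Matrix.zero_mul]
    have hPSD1 : (Q * A * Qᴴ).PosSemidef := hA.mul_mul_conjTranspose_same Q
    have hPSD2 : (Q * B * Qᴴ).PosSemidef := hB.mul_mul_conjTranspose_same Q
    have h0 : Q * A * Qᴴ = 0 := psd_add_eq_zero hPSD1 hPSD2 hsum
    -- factor through the square root
    have hsq : A = CFC.sqrt A * CFC.sqrt A := (CFC.sqrt_mul_sqrt_self A hA.nonneg).symm
    have hsqH : (CFC.sqrt A)ᴴ = CFC.sqrt A := (CFC.sqrt_nonneg A).posSemidef.1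
    have hQQ : (Q * CFC.sqrt A) * (Q * CFC.sqrt A)ᴴ = 0 := by
      calc (Q * CFC.sqrt A) * (Q * CFC.sqrt A)ᴴ = Q * (CFC.sqrt A * CFC.sqrt A) * Qᴴ := by
            rw [conjTranspose_mul, hsqH, hQH]; noncomm_ring
      _ = 0 := by rw [← hsq, h0]
    have hQsqrt : Q * CFC.sqrt A = 0 := self_mul_conjTranspose_eq_zero.mp hQQ
    calc Q * A = Q * (CFC.sqrt A * CFC.sqrt A) := by rw [← hsq]
    _ = (Q * CFC.sqrt A) * CFC.sqrt A := by noncomm_ring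
    _ = 0 := by rw [hQsqrt, Matrix.zero_mul]
  have hQRd : Q * Rd = 0 := key Rd Ri hRd hRi rfl
  -- hence S * Sp * Rd = Rd and Rd * Sp * S = Rd
  have hSSpRd : S * Sp * Rd = Rd := by
    have h' : (1 - S * Sp) * Rd = 0 := hQRd
    rw [Matrix.sub_mul, Matrix.one_mul, sub_eq_zero] at h'
    exact h'.symm
  have hRdSpS : Rd * Sp * S = Rd := by
    calc Rd * Sp * S = Rdᴴ * Spᴴ * Sᴴ := by rw [hRd.1, hSpH, hSH]
    _ = (S * Sp * Rd)ᴴ := by simp [conjTranspose_mul, Matrix.mul_assoc]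
    _ = Rd := by rw [hSSpRd, hRd.1]
  -- the cross term C = Rd * Sp * Ri
  set C : Matrix (Fin M) (Fin M) ℂ := Rd * Sp * Ri with hCdef
  have hCalt : C = Rd - Rd * Sp * Rd := by
    have hRiS : Ri = S - Rd := by rw [hSdef]; abel
    rw [hCdef, hRiS, Matrix.mul_sub, hRdSpS]
  have hCH : Cᴴ = C := by
    rw [hCalt]
    simp [conjTranspose_sub, conjTranspose_mul, hRd.1.eq, hSpH, Matrix.mul_assoc]
  have hCalt2 : C = Ri * Sp * Rd := by
    calc C = Cᴴ := hCH.symm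
    _ = Riᴴ * Spᴴ * Rdᴴ := by simp [hCdef, conjTranspose_mul, Matrix.mul_assoc]
    _ = Ri * Sp * Rd := by rw [hRi.1, hSpH, hRd.1]
  -- rank / range argument: range C ≤ range Rd ⊓ range Ri = ⊥
  have hrange1 : LinearMap.range C.mulVecLin ≤ LinearMap.range Rd.mulVecLin := by
    have : C = Rd * (Sp * Ri) := by rw [hCdef, Matrix.mul_assoc]
    rw [this, mulVecLin_mul]
    exact LinearMap.range_comp_le_range _ _
  have hrange2 : LinearMap.range C.mulVecLin ≤ LinearMap.range Ri.mulVecLin := by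
    have : C = Ri * (Sp * Rd) := by rw [hCalt2, Matrix.mul_assoc]
    rw [this, mulVecLin_mul]
    exact LinearMap.range_comp_le_range _ _
  have hinf : LinearMap.range Rd.mulVecLin ⊓ LinearMap.range Ri.mulVecLin = ⊥ := by
    set U := LinearMap.range Rd.mulVecLin
    set V := LinearMap.range Ri.mulVecLin
    have hsup : LinearMap.range S.mulVecLin ≤ U ⊔ V := by
      rintro y ⟨x, rfl⟩
      have : S.mulVecLin x = Rd.mulVecLin x + Ri.mulVecLin x := by
        simp [hSdef, mulVecLin_add]
      rw [this]
      exact Submodule.add_mem_sup (LinearMap.mem_range_self _ x)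
        (LinearMap.mem_range_self _ x)
    have hdim : Module.finrank ℂ (U ⊔ V : Submodule ℂ (Fin M → ℂ))
        + Module.finrank ℂ (U ⊓ V : Submodule ℂ (Fin M → ℂ))
        = Module.finrank ℂ U + Module.finrank ℂ V :=
      Submodule.finrank_sup_add_finrank_inf_eq U V
    have hWle : Module.finrank ℂ (LinearMap.range S.mulVecLin)
        ≤ Module.finrank ℂ (U ⊔ V : Submodule ℂ (Fin M → ℂ)) :=
      Submodule.finrank_mono hsup
    have hsuple : Module.finrank ℂ (U ⊔ V : Submodule ℂ (Fin M → ℂ))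
        ≤ Module.finrank ℂ U + Module.finrank ℂ V := by omega
    have hrank' : Module.finrank ℂ (LinearMap.range S.mulVecLin)
        = Module.finrank ℂ U + Module.finrank ℂ V := hrank
    have : Module.finrank ℂ (U ⊓ V : Submodule ℂ (Fin M → ℂ)) = 0 := by omega
    exact Submodule.finrank_eq_zero.mp this
  have hCrange : LinearMap.range C.mulVecLin = ⊥ :=
    le_bot_iff.mp (hinf ▸ le_inf hrange1 hrange2)
  have hC0 : C = 0 := by
    have hlin : C.mulVecLin = 0 := LinearMap.range_eq_bot.mp hCrange
    ext i j
    have := congrFun (congrArg DFunLike.coe hlin) (Pi.single j 1)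
    have := congrFun this i
    simpa [mulVecLin, mulVec_single] using this
  exact hCalt.symm.trans hC0
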